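/- Let d ≥ 1 and let s be a point of the unit sphere 𝕊^d ⊂ ℝ^{d+1} with s_{d+1} < 1. Then ‖h₁(φ(s))‖ = arccos(−s_{d+1}); in particular ‖h₁(φ(s))‖ < π, so the range of h₁ ∘ φ on 𝕊^d ∖ {s_n} is contained in the open ball of radius π centered at the origin of ℝ^d. -/

import Mathlib

open Real
open scoped RealInnerProductSpace

noncomputable section

/-- The first `d` coordinates of a point of `ℝ^{d+1}`, i.e. `s[1:d]`. -/
def stereoProj {d : ℕ} (s : EuclideanSpace ℝ (Fin (d + 1))) : EuclideanSpace ℝ (Fin d) :=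
  WithLp.toLp 2 (fun i => s (Fin.castSucc i))

/-- The stereographic projection `φ(s) = s[1:d] / (1 - s_{d+1})`. -/
def stereo {d : ℕ} (s : EuclideanSpace ℝ (Fin (d + 1))) : EuclideanSpace ℝ (Fin d) :=
  (1 - s (Fin.last d))⁻¹ • stereoProj s

open Classical in
/-- The map `h₁(x) = arccos((1 - ‖x‖²)/(1 + ‖x‖²)) • x/‖x‖` for `x ≠ 0`, `h₁(0) = 0`. -/
def h1 {d : ℕ} (x : EuclideanSpace ℝ (Fin d)) : EuclideanSpace ℝ (Fin d) :=
  if x = 0 then 0 else Real.arccos ((1 - ‖x‖ ^ 2) / (1 + ‖x‖ ^ 2)) • ‖x‖⁻¹ • x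

/-- The north pole `s_n = (0, …, 0, 1)` of `𝕊^d ⊂ ℝ^{d+1}`. -/
def northPole (d : ℕ) : EuclideanSpace ℝ (Fin (d + 1)) :=
  EuclideanSpace.single (Fin.last d) 1

/-- The south pole `s₀ = (0, …, 0, -1)` of `𝕊^d ⊂ ℝ^{d+1}`. -/
def southPole (d : ℕ) : EuclideanSpace ℝ (Fin (d + 1)) :=
  EuclideanSpace.single (Fin.last d) (-1)

end

/-- for `s ∈ 𝕊^d` with `s_{d+1} < 1`, `‖h₁(φ(s))‖ = arccos(-s_{d+1}) < π`;
in particular `h₁(φ(s))` lies in the open ball of radius `π` centered at the origin. -/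
theorem stmt2 {d : ℕ} (hd : 1 ≤ d) (s : EuclideanSpace ℝ (Fin (d + 1)))
    (hs : ‖s‖ = 1) (hlt : s (Fin.last d) < 1) :
    ‖h1 (stereo s)‖ = Real.arccos (-(s (Fin.last d))) ∧ ‖h1 (stereo s)‖ < π ∧
      h1 (stereo s) ∈ Metric.ball (0 : EuclideanSpace ℝ (Fin d)) π := by
  set t := s (Fin.last d) with htdef
  have h1t : (0:ℝ) < 1 - t := by linarith
  have h1t' : (1 - t) ≠ 0 := ne_of_gt h1t
  have hsum : ∑ i, s i ^ 2 = 1 := by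
    have := EuclideanSpace.norm_eq s
    rw [hs] at this
    have h2 : ∑ i, ‖s i‖ ^ 2 = 1 := by
      have := congrArg (· ^ 2) this.symm
      simpa [Real.sq_sqrt (Finset.sum_nonneg fun i _ => sq_nonneg _)] using this
    simpa [Real.norm_eq_abs, sq_abs] using h2
  have hproj : ‖stereoProj s‖ ^ 2 = 1 - t ^ 2 := by
    have : ‖stereoProj s‖ ^ 2 = ∑ i : Fin d, s (Fin.castSucc i) ^ 2 := by
      rw [EuclideanSpace.norm_eq]
      rw [Real.sq_sqrt (Finset.sum_nonneg fun i _ => sq_nonneg _)]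
      simp [stereoProj, Real.norm_eq_abs, sq_abs]
    rw [this]
    have := Fin.sum_univ_castSucc (f := fun i => s i ^ 2)
    rw [this] at hsum
    linarith
  have hx : ‖stereo s‖ ^ 2 = (1 + t) / (1 - t) := by
    have : ‖stereo s‖ = ‖(1 - t)⁻¹‖ * ‖stereoProj s‖ := by
      rw [stereo, norm_smul]
    rw [this, mul_pow, hproj, norm_inv, Real.norm_eq_abs, abs_of_pos h1t]
    field_simp
    ring
  rcases eq_or_ne (stereo s) 0 with h0 | h0
  · have ht : t = -1 := by
      have : (1 + t) / (1 - t) = 0 := by rw [← hx, h0]; simp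
      have := (div_eq_zero_iff.mp this).resolve_right h1t'
      linarith
    have hz : h1 (stereo s) = 0 := by rw [h0]; simp [h1]
    refine ⟨?_, ?_, ?_⟩ <;> simp [hz, ht, Real.arccos_one, Real.pi_pos]
  · have hxpos : 0 < ‖stereo s‖ := norm_pos_iff.mpr h0
    have hden : (0:ℝ) < 1 + ‖stereo s‖ ^ 2 := by positivity
    have key : (1 - ‖stereo s‖ ^ 2) / (1 + ‖stereo s‖ ^ 2) = -t := by
      rw [hx]
      field_simp
      ring
    have hnorm : ‖h1 (stereo s)‖ = Real.arccos (-t) := by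
      rw [h1, if_neg h0, key, norm_smul, norm_smul, norm_inv, norm_norm,
        inv_mul_cancel₀ (ne_of_gt hxpos), mul_one, Real.norm_eq_abs,
        abs_of_nonneg (Real.arccos_nonneg _)]
    have hlt2 : Real.arccos (-t) < π := by
      have : -1 < -t := by linarith
      refine lt_of_le_of_ne (Real.arccos_le_pi _) fun h => ?_
      have := Real.arccos_eq_pi.mp h
      linarith
    refine ⟨hnorm, hnorm ▸ hlt2, ?_⟩
    rw [Metric.mem_ball, dist_zero_right]
    exact hnorm ▸ hlt2
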